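/- (Full-rank condition of Theorem 1 for the multi-coil MRI operator.) Let n, m, K : ℕ, let F belong to the unitary group of n×n complex matrices, let S : Fin m → Matrix (Fin n) (Fin n) ℂ be diagonal matrices with ∑ i, (S i)ᴴ * S i = 1, and let P : Fin K → Matrix (Fin n) (Fin n) ℂ be diagonal matrices whose diagonal entries all lie in {0, 1}. For each k, set A k := ∑ i, (S i)ᴴ * Fᴴ * (P k) * F * (S i). Let w : Fin K → ℝ satisfy w k ≥ 0 and ∑ k, w k = 1, and assume that for every index j there exists k with w k > 0 and (P k) j j = 1. Then ∑ k, (w k : ℂ) • ((A k)ᴴ * (A k)) is positive definite, i.e. the conditional second moment E[A_trainᴴ A_train | P̃] of the MRI forward operator is full rank. -/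

import Mathlib

set_option maxHeartbeats 1000000


open Matrix
open scoped BigOperators ComplexOrder

private lemma sum_mulVec' {n : ℕ} {ι : Type*} (s : Finset ι)
    (M : ι → Matrix (Fin n) (Fin n) ℂ) (v : Fin n → ℂ) :
    (∑ i ∈ s, M i) *ᵥ v = ∑ i ∈ s, M i *ᵥ v := by
  classical
  induction s using Finset.induction with
  | empty => simp
  | insert _ _ h ih => rw [Finset.sum_insert h, Finset.sum_insert h, add_mulVec, ih]

private lemma dotProduct_sum' {n : ℕ} {ι : Type*} (s : Finset ι) (v : Fin n → ℂ)
    (f : ι → Fin n → ℂ) :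
    v ⬝ᵥ (∑ i ∈ s, f i) = ∑ i ∈ s, v ⬝ᵥ f i := by
  classical
  induction s using Finset.induction with
  | empty => simp
  | insert _ _ h ih => rw [Finset.sum_insert h, Finset.sum_insert h, dotProduct_add, ih]

/-- **Full-rank condition of Theorem 1 for the multi-coil MRI operator.**
Let `F` be unitary, `S i` diagonal matrices with `∑ i, (S i)ᴴ * S i = 1`, and `P k`
diagonal matrices with diagonal entries in `{0, 1}`; let
`A k := ∑ i, (S i)ᴴ * Fᴴ * (P k) * F * (S i)`.  If `w k ≥ 0`, `∑ k, w k = 1`, and every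
index `j` is covered (`∃ k, w k > 0 ∧ (P k) j j = 1`), then the conditional second moment
`∑ k, w k • ((A k)ᴴ * (A k))` is positive definite, i.e. `E[A_trainᴴ A_train | P̃]` is
full rank. -/
theorem mri_second_moment_posDef
    {n m K : ℕ} (F : Matrix.unitaryGroup (Fin n) ℂ)
    (S : Fin m → Matrix (Fin n) (Fin n) ℂ)
    (hSdiag : ∀ i, (S i).IsDiag)
    (hSsum : ∑ i, (S i)ᴴ * S i = 1)
    (P : Fin K → Matrix (Fin n) (Fin n) ℂ)
    (hPdiag : ∀ k, (P k).IsDiag)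
    (hP01 : ∀ k j, (P k) j j = 0 ∨ (P k) j j = 1)
    (A : Fin K → Matrix (Fin n) (Fin n) ℂ)
    (hAdef : ∀ k, A k = ∑ i, (S i)ᴴ * (F : Matrix (Fin n) (Fin n) ℂ)ᴴ * P k
        * (F : Matrix (Fin n) (Fin n) ℂ) * S i)
    (w : Fin K → ℝ) (hw : ∀ k, w k ≥ 0) (hwsum : ∑ k, w k = 1)
    (hcover : ∀ j, ∃ k, w k > 0 ∧ (P k) j j = 1) :
    (∑ k, (w k : ℂ) • ((A k)ᴴ * A k)).PosDef := by
  have hPherm : ∀ k, (P k)ᴴ = P k := by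
    intro k
    have hd : star (P k).diag = (P k).diag := by
      funext j
      rcases hP01 k j with h | h <;> simp [Matrix.diag, h]
    rw [← (hPdiag k).diagonal_diag, diagonal_conjTranspose, hd]
  have hPidem : ∀ k, P k * P k = P k := by
    intro k
    have hd : (fun j => (P k).diag j * (P k).diag j) = (P k).diag := by
      funext j
      rcases hP01 k j with h | h <;> simp [Matrix.diag, h]
    rw [← (hPdiag k).diagonal_diag, diagonal_mul_diagonal, hd]
  have hFF : (F : Matrix (Fin n) (Fin n) ℂ)ᴴ * (F : Matrix (Fin n) (Fin n) ℂ) = 1 := by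
    have h := (Unitary.mem_iff.mp F.prop).1
    simpa [Matrix.star_eq_conjTranspose] using h
  -- key injectivity claim
  have key : ∀ x : Fin n → ℂ, (∀ k, 0 < w k → A k *ᵥ x = 0) → x = 0 := by
    intro x hx
    have hB : ∀ k, 0 < w k → ∀ i, (P k * (F : Matrix (Fin n) (Fin n) ℂ) * S i) *ᵥ x = 0 := by
      intro k hk
      have hPP : ∀ Y : Matrix (Fin n) (Fin n) ℂ, P k * (P k * Y) = P k * Y := by
        intro Y; rw [← Matrix.mul_assoc, hPidem k]
      have hterm : ∀ i, star ((P k * (F : Matrix (Fin n) (Fin n) ℂ) * S i) *ᵥ x) ⬝ᵥ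
          ((P k * (F : Matrix (Fin n) (Fin n) ℂ) * S i) *ᵥ x)
          = star x ⬝ᵥ (((S i)ᴴ * (F : Matrix (Fin n) (Fin n) ℂ)ᴴ * P k
            * (F : Matrix (Fin n) (Fin n) ℂ) * S i) *ᵥ x) := by
        intro i
        rw [star_mulVec, ← dotProduct_mulVec, mulVec_mulVec]
        congr 2
        simp only [conjTranspose_mul, conjTranspose_conjTranspose, hPherm,
          Matrix.mul_assoc, hPP]
      have h0 : ∑ i, star ((P k * (F : Matrix (Fin n) (Fin n) ℂ) * S i) *ᵥ x) ⬝ᵥ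
          ((P k * (F : Matrix (Fin n) (Fin n) ℂ) * S i) *ᵥ x) = 0 := by
        have hz := hx k hk
        calc ∑ i, star ((P k * (F : Matrix (Fin n) (Fin n) ℂ) * S i) *ᵥ x) ⬝ᵥ
              ((P k * (F : Matrix (Fin n) (Fin n) ℂ) * S i) *ᵥ x)
            = star x ⬝ᵥ (A k *ᵥ x) := by
              rw [hAdef, sum_mulVec', dotProduct_sum']
              exact Finset.sum_congr rfl fun i _ => hterm i
          _ = 0 := by rw [hz, dotProduct_zero]
      intro i
      have := (Finset.sum_eq_zero_iff_of_nonneg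
        (fun i _ => dotProduct_star_self_nonneg _)).mp h0 i (Finset.mem_univ i)
      exact dotProduct_star_self_eq_zero.mp this
    have hFS : ∀ i, (F : Matrix (Fin n) (Fin n) ℂ) *ᵥ (S i *ᵥ x) = 0 := by
      intro i
      funext j
      obtain ⟨k, hk, h1⟩ := hcover j
      have h := congrFun (hB k hk i) j
      rw [← mulVec_mulVec, ← mulVec_mulVec, ← (hPdiag k).diagonal_diag] at h
      simpa [mulVec_diagonal, Matrix.diag, h1] using h
    have hS : ∀ i, S i *ᵥ x = 0 := by
      intro i
      have h := congrArg (fun v => (F : Matrix (Fin n) (Fin n) ℂ)ᴴ *ᵥ v) (hFS i)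
      simpa [mulVec_mulVec, ← Matrix.mul_assoc, hFF] using h
    calc x = (1 : Matrix (Fin n) (Fin n) ℂ) *ᵥ x := (one_mulVec x).symm
      _ = (∑ i, (S i)ᴴ * S i) *ᵥ x := by rw [hSsum]
      _ = ∑ i, (S i)ᴴ *ᵥ (S i *ᵥ x) := by
          rw [sum_mulVec']
          exact Finset.sum_congr rfl fun i _ => (mulVec_mulVec _ _ _).symm
      _ = 0 := by simp [hS]
  rw [posDef_iff_dotProduct_mulVec]
  constructor
  · show _ = _
    rw [conjTranspose_sum]
    refine Finset.sum_congr rfl fun k _ => ?_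
    rw [conjTranspose_smul, conjTranspose_mul, conjTranspose_conjTranspose]
    congr 1
    simp [Complex.star_def, Complex.conj_ofReal]
  · intro x hx
    have hq : star x ⬝ᵥ ((∑ k, (w k : ℂ) • ((A k)ᴴ * A k)) *ᵥ x)
        = ∑ k, (w k : ℂ) * (star (A k *ᵥ x) ⬝ᵥ (A k *ᵥ x)) := by
      rw [sum_mulVec', dotProduct_sum']
      refine Finset.sum_congr rfl fun k _ => ?_
      rw [smul_mulVec, dotProduct_smul, smul_eq_mul, ← mulVec_mulVec,
        dotProduct_mulVec, ← star_mulVec]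
    rw [hq]
    have hex : ∃ k, 0 < w k ∧ A k *ᵥ x ≠ 0 := by
      by_contra hcon
      push_neg at hcon
      exact hx (key x hcon)
    obtain ⟨k, hk, hne⟩ := hex
    refine Finset.sum_pos' (fun k _ => ?_) ⟨k, Finset.mem_univ k, ?_⟩
    · exact mul_nonneg (by exact_mod_cast Complex.zero_le_real.mpr (hw k))
        (dotProduct_star_self_nonneg _)
    · exact mul_pos (by exact_mod_cast Complex.zero_lt_real.mpr hk)
        (lt_of_le_of_ne (dotProduct_star_self_nonneg _)
          (fun h => hne (dotProduct_star_self_eq_zero.mp h.symm)))
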